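/- Let F_n(x) = 2T_n(x/2 + 1) − 2 and let m, n be positive integers. Then gcd(F_m(x), F_n(x)) = F_{gcd(m,n)}(x) in ℚ[x] (up to units, taking all polynomials monic). -/

import Mathlib

open Polynomial

namespace FGcdAux

open Polynomial.Chebyshev

noncomputable def W (j : ℤ) : ℚ[X] := (T ℚ j).comp (C (1/2) * X + C 1)

noncomputable def G (j : ℤ) : ℚ[X] := 2 * W j - 2

lemma W_zero : W 0 = 1 := by simp [W, T_zero]

lemma W_one : W 1 = C (1/2) * X + C 1 := by simp [W, T_one]

lemma W_neg (j : ℤ) : W (-j) = W j := by simp [W, T_neg]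

lemma W_mul_W (a b : ℤ) : 2 * W a * W b = W (a + b) + W (a - b) := by
  have h := congrArg (fun p : ℚ[X] => p.comp (C (1/2) * X + C 1)) (T_mul_T (R := ℚ) a b)
  simpa [W, mul_comp, add_comp] using h

lemma G_zero : G 0 = 0 := by simp [G, W_zero]

lemma G_neg (j : ℤ) : G (-j) = G j := by simp [G, W_neg]

lemma dvd_G_add {d : ℚ[X]} {a b : ℤ} (ha : d ∣ G a) (hb : d ∣ G b) :
    d ∣ G (a + b) := by
  have h1 : 2 * W a * W b = W (a + b) + W (a - b) := W_mul_W a b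
  have h2 : 2 * W (a + b) * W (a - b) = W (2 * a) + W (2 * b) := by
    have h := W_mul_W (a + b) (a - b)
    rw [show a + b + (a - b) = 2 * a by ring, show a + b - (a - b) = 2 * b by ring] at h
    exact h
  have h3 : 2 * W a * W a = W (2 * a) + 1 := by
    have h := W_mul_W a a
    rw [show a + a = 2 * a by ring, sub_self, W_zero] at h
    exact h
  have h4 : 2 * W b * W b = W (2 * b) + 1 := by
    have h := W_mul_W b b
    rw [show b + b = 2 * b by ring, sub_self, W_zero] at h
    exact h
  have hsum : G (a + b) + G (a - b) = G a * (G b + 2) + 2 * G b := by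
    simp only [G]
    linear_combination (-2 : ℚ[X]) * h1
  have key : (G (a + b) - G (a - b)) ^ 2 = G a * G b * ((G a + 4) * (G b + 4)) := by
    simp only [G]
    linear_combination (-4 * (W (a + b) + W (a - b) + 2 * W a * W b)) * h1
      - 8 * h2 + 8 * h3 + 8 * h4
  have hd1 : d ∣ G (a + b) + G (a - b) := by
    rw [hsum]
    exact dvd_add (ha.mul_right _) (hb.mul_left _)
  have hd2 : d ^ 2 ∣ (G (a + b) - G (a - b)) ^ 2 := by
    rw [key, sq]
    exact dvd_mul_of_dvd_left (mul_dvd_mul ha hb) _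
  have hd3 : d ∣ G (a + b) - G (a - b) :=
    (IsIntegrallyClosed.pow_dvd_pow_iff (two_ne_zero)).mp hd2
  have hd4 : d ∣ 2 * G (a + b) := by
    have := dvd_add hd1 hd3
    rwa [show G (a + b) + G (a - b) + (G (a + b) - G (a - b)) = 2 * G (a + b) by ring] at this
  have h12 : (C (1/2) : ℚ[X]) * 2 = 1 := by
    rw [← map_ofNat (C : ℚ →+* ℚ[X]) 2, ← Polynomial.C_mul]
    norm_num
  have : G (a + b) = C (1/2) * (2 * G (a + b)) := by
    rw [← mul_assoc, h12, one_mul]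
  rw [this]
  exact hd4.mul_left _

lemma dvd_G_mul {d : ℚ[X]} {a : ℤ} (ha : d ∣ G a) (k : ℤ) : d ∣ G (k * a) := by
  induction k using Int.induction_on with
  | zero => simpa [G_zero] using dvd_zero d
  | succ k ih =>
      have := dvd_G_add ih ha
      rwa [show (k : ℤ) * a + a = (k + 1) * a by ring] at this
  | pred k ih =>
      have ha' : d ∣ G (-a) := by rwa [G_neg]
      have h := dvd_G_add ih ha'
      rwa [show (-(k : ℤ)) * a + -a = (-(k : ℤ) - 1) * a by ring] at h

lemma W_rec (n : ℤ) : W (n + 2) = (X + C 2) * W (n + 1) - W n := by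
  have h := W_mul_W (n + 1) 1
  rw [show n + 1 + 1 = n + 2 by ring, show n + 1 - 1 = n by ring] at h
  have h2 : (2 : ℚ[X]) * W 1 = X + C 2 := by
    rw [W_one, show (2 : ℚ[X]) = C 2 from (map_ofNat (C : ℚ →+* ℚ[X]) 2).symm,
      mul_add, ← mul_assoc, ← Polynomial.C_mul, ← Polynomial.C_mul]
    norm_num
  have h3 : (X + C 2) * W (n + 1) = W (n + 2) + W n := by
    rw [← h2]; linear_combination h
  rw [h3]; ring

lemma W_deg : ∀ n : ℕ, (W n).natDegree = n ∧
    (W n).leadingCoeff = (if n = 0 then 1 else 1/2) := by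
  intro n
  induction n using Nat.strong_induction_on with
  | _ n ih =>
    match n with
    | 0 => simp [W_zero]
    | 1 =>
      rw [show ((1:ℕ):ℤ) = 1 by norm_num, W_one]
      constructor
      · exact natDegree_linear (by norm_num)
      · rw [if_neg one_ne_zero, leadingCoeff_linear (show (1/2 : ℚ) ≠ 0 by norm_num)]
    | (k+2) =>
      obtain ⟨hd1, hl1⟩ := ih (k+1) (by omega)
      obtain ⟨hd0, hl0⟩ := ih k (by omega)
      have hl1' : (W (k+1:ℕ)).leadingCoeff = 1/2 := by simpa using hl1
      have hW1ne : W (k+1:ℕ) ≠ 0 := by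
        intro h; rw [h] at hl1'; simp at hl1'
      have hW0ne : W (k:ℕ) ≠ 0 := by
        intro h; rw [h] at hl0
        split_ifs at hl0 <;> simp_all
      have hrec : W ((k+2 : ℕ) : ℤ) = (X + C 2) * W ((k+1 : ℕ) : ℤ) - W (k : ℕ) := by
        have := W_rec (k : ℤ)
        rw [show ((k+2 : ℕ) : ℤ) = (k : ℤ) + 2 by push_cast; ring,
          show ((k+1 : ℕ) : ℤ) = (k : ℤ) + 1 by push_cast; ring]
        exact this
      have hXne : (X + C 2 : ℚ[X]) ≠ 0 := (monic_X_add_C (2:ℚ)).ne_zero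
      have hdA : ((X + C 2) * W ((k+1:ℕ) : ℤ)).natDegree = k + 2 := by
        rw [natDegree_mul hXne hW1ne, natDegree_X_add_C, hd1]; omega
      have hlA : ((X + C 2) * W ((k+1:ℕ) : ℤ)).leadingCoeff = 1/2 := by
        rw [leadingCoeff_mul, (monic_X_add_C (2:ℚ)).leadingCoeff, one_mul, hl1']
      have hAne : ((X + C 2) * W ((k+1:ℕ) : ℤ)) ≠ 0 := mul_ne_zero hXne hW1ne
      have hdlt : (W (k:ℕ)).degree < ((X + C 2) * W ((k+1:ℕ) : ℤ)).degree := by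
        rw [degree_eq_natDegree hW0ne, degree_eq_natDegree hAne, hdA, hd0]
        exact_mod_cast by omega
      constructor
      · rw [hrec, natDegree_sub_eq_left_of_natDegree_lt (by rw [hdA, hd0]; omega), hdA]
      · rw [hrec, leadingCoeff_sub_of_degree_lt hdlt, hlA]
        simp

lemma G_monic (n : ℕ) (hn : 0 < n) : (G n).Monic := by
  obtain ⟨hd, hl⟩ := W_deg n
  have hl' : (W n).leadingCoeff = 1/2 := by rw [hl, if_neg (by omega)]
  have hWne : W (n:ℕ) ≠ 0 := by intro h; rw [h] at hl'; simp at hl'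
  have hC2 : (2 : ℚ[X]) = C 2 := (map_ofNat (C : ℚ →+* ℚ[X]) 2).symm
  have hAne : (2 : ℚ[X]) * W n ≠ 0 := mul_ne_zero (by norm_num) hWne
  have hdA : ((2 : ℚ[X]) * W n).natDegree = n := by
    rw [hC2, natDegree_mul (by simp) hWne, natDegree_C, hd, zero_add]
  have hlA : ((2 : ℚ[X]) * W n).leadingCoeff = 1 := by
    rw [hC2, leadingCoeff_mul, leadingCoeff_C, hl']
    norm_num
  have hdlt : ((2 : ℚ[X]) : ℚ[X]).degree < ((2 : ℚ[X]) * W n).degree := by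
    rw [degree_eq_natDegree hAne, hdA, hC2, degree_C (by norm_num : (2:ℚ) ≠ 0)]
    exact_mod_cast by omega
  have : (G n).leadingCoeff = 1 := by
    rw [G, leadingCoeff_sub_of_degree_lt hdlt, hlA]
  exact this

end FGcdAux

theorem F_gcd (F : ℕ → ℚ[X])
    (hF : ∀ j : ℕ, F j =
      C 2 * (Polynomial.Chebyshev.T ℚ (j : ℤ)).comp (C (1/2) * X + C 1) - C 2)
    (m n : ℕ) (hm : 0 < m) (hn : 0 < n) :
    gcd (F m) (F n) = F (Nat.gcd m n) := by
  have hFG : ∀ j : ℕ, F j = FGcdAux.G j := by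
    intro j
    rw [hF j]
    simp only [FGcdAux.G, FGcdAux.W]
    rw [show (2 : ℚ[X]) = C 2 from (map_ofNat (C : ℚ →+* ℚ[X]) 2).symm]
  set g := Nat.gcd m n with hg
  have hgpos : 0 < g := Nat.gcd_pos_of_pos_left n hm
  have hdvd : ∀ k : ℕ, g ∣ k → FGcdAux.G g ∣ FGcdAux.G k := by
    intro k hk
    have : ((k : ℤ)) = ((k / g : ℕ) : ℤ) * (g : ℤ) := by
      exact_mod_cast (Nat.div_mul_cancel hk).symm
    rw [this]
    exact FGcdAux.dvd_G_mul dvd_rfl _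
  have h1 : F g ∣ gcd (F m) (F n) :=
    dvd_gcd (by rw [hFG g, hFG m]; exact hdvd m (Nat.gcd_dvd_left m n))
      (by rw [hFG g, hFG n]; exact hdvd n (Nat.gcd_dvd_right m n))
  have h2 : gcd (F m) (F n) ∣ F g := by
    have hm' : gcd (F m) (F n) ∣ FGcdAux.G m := by
      rw [← hFG m]; exact gcd_dvd_left _ _
    have hn' : gcd (F m) (F n) ∣ FGcdAux.G n := by
      rw [← hFG n]; exact gcd_dvd_right _ _
    have hb : (g : ℤ) = m * Nat.gcdA m n + n * Nat.gcdB m n := Nat.gcd_eq_gcd_ab m n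
    have h3 : gcd (F m) (F n) ∣
        FGcdAux.G ((Nat.gcdA m n) * m + (Nat.gcdB m n) * n) :=
      FGcdAux.dvd_G_add (FGcdAux.dvd_G_mul hm' _) (FGcdAux.dvd_G_mul hn' _)
    rw [hFG g]
    rwa [show (Nat.gcdA m n) * m + (Nat.gcdB m n) * n = (g : ℤ) by rw [hb]; ring] at h3
  have hmono : (F g).Monic := by rw [hFG g]; exact FGcdAux.G_monic g hgpos
  have h4 := normalize_eq_normalize h2 h1
  rwa [normalize_gcd, hmono.normalize_eq_self] at h4
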